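/- Fix N ≥ 1 and define the auxiliary sums a_n^{N,j} = Σ over (p_1,...,p_N) with Σp_i = n of (n!/(p_1!⋯p_N!))^2 * p_1*p_2*⋯*p_j, for 0 ≤ j ≤ N (with a_n^{N,0} = a_n^N and a_n^{N,N+1} = 0). Then for all 0 ≤ j ≤ N and n ≥ 1: n * a_n^{N,j} = (N-j) * a_n^{N,j+1} + j * n^2 * a_{n-1}^{N,j-1}, where a_{n}^{N,-1} = 0. -/

import Mathlib

open Finset Nat

private lemma mult_comp {N : ℕ} (σ : Equiv.Perm (Fin N)) (p : Fin N → ℕ) :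
    Nat.multinomial Finset.univ (p ∘ σ) = Nat.multinomial Finset.univ p := by
  unfold Nat.multinomial
  simp only [Function.comp_apply]
  rw [Equiv.sum_comp σ p, Equiv.prod_comp σ (fun i => (p i)!)]

private lemma mult_decr {N : ℕ} (p : Fin N → ℕ) (k : Fin N) (hk : 1 ≤ p k) :
    Nat.multinomial Finset.univ p * p k =
      (∑ i, p i) * Nat.multinomial Finset.univ (Function.update p k (p k - 1)) := by
  set q := Function.update p k (p k - 1) with hq
  have hqk : q k = p k - 1 := by simp [hq]
  have herase : ∀ i ∈ Finset.univ.erase k, q i = p i := fun i hi => by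
    rw [hq, Function.update_of_ne (Finset.ne_of_mem_erase hi)]
  have heraseP : ∏ i ∈ Finset.univ.erase k, (q i)! = ∏ i ∈ Finset.univ.erase k, (p i)! :=
    Finset.prod_congr rfl fun i hi => by rw [herase i hi]
  have heraseS : ∑ i ∈ Finset.univ.erase k, q i = ∑ i ∈ Finset.univ.erase k, p i :=
    Finset.sum_congr rfl herase
  have hsum : ∑ i, q i = (∑ i, p i) - 1 := by
    rw [← Finset.add_sum_erase _ q (Finset.mem_univ k),
      ← Finset.add_sum_erase _ p (Finset.mem_univ k), heraseS, hqk]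
    omega
  have hsump : 1 ≤ ∑ i, p i :=
    le_trans hk (Finset.single_le_sum (fun i _ => Nat.zero_le _) (Finset.mem_univ k))
  have hprodq : (0:ℕ) < ∏ i, (q i)! := Finset.prod_pos fun i _ => Nat.factorial_pos _
  apply Nat.eq_of_mul_eq_mul_left hprodq
  have h1 : (∏ i, (p i)!) = p k * ∏ i, (q i)! := by
    rw [← Finset.mul_prod_erase _ (fun i => (p i)!) (Finset.mem_univ k),
      ← Finset.mul_prod_erase _ (fun i => (q i)!) (Finset.mem_univ k), heraseP, hqk,
      ← mul_assoc, Nat.mul_factorial_pred (by omega : p k ≠ 0)]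
  calc (∏ i, (q i)!) * (Nat.multinomial Finset.univ p * p k)
      = (∏ i, (p i)!) * Nat.multinomial Finset.univ p := by rw [h1]; ring
    _ = (∑ i, p i)! := Nat.multinomial_spec _ _
    _ = (∑ i, p i) * ((∑ i, p i) - 1)! := by
        rw [← Nat.mul_factorial_pred (by omega : ∑ i, p i ≠ 0)]
    _ = (∑ i, p i) * (∑ i, q i)! := by rw [hsum]
    _ = (∑ i, p i) * ((∏ i, (q i)!) * Nat.multinomial Finset.univ q) := by
        rw [Nat.multinomial_spec]
    _ = (∏ i, (q i)!) * ((∑ i, p i) * Nat.multinomial Finset.univ q) := by ring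

private lemma sum_AT_comp {N n : ℕ} (σ : Equiv.Perm (Fin N)) (F : (Fin N → ℕ) → ℕ) :
    ∑ p ∈ Finset.Nat.antidiagonalTuple N n, F (p ∘ σ) =
      ∑ p ∈ Finset.Nat.antidiagonalTuple N n, F p := by
  apply Finset.sum_nbij' (i := fun p => p ∘ σ) (j := fun p => p ∘ σ.symm)
  · intro p hp
    rw [Finset.Nat.mem_antidiagonalTuple] at *
    rw [← hp]
    exact Equiv.sum_comp σ p
  · intro p hp
    rw [Finset.Nat.mem_antidiagonalTuple] at *
    rw [← hp]
    exact Equiv.sum_comp σ.symm p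
  · intro p _; ext i; simp
  · intro p _; ext i; simp
  · intro p _; rfl

private lemma card_filter_lt {N j : ℕ} (h : j ≤ N) :
    ((Finset.univ : Finset (Fin N)).filter fun i : Fin N => (i : ℕ) < j).card = j := by
  have heq : ((Finset.univ : Finset (Fin N)).filter fun i : Fin N => (i : ℕ) < j) =
      (Finset.range j).attachFin
        (fun m hm => lt_of_lt_of_le (Finset.mem_range.mp hm) h) := by
    ext i
    simp [Finset.mem_attachFin]
  rw [heq, Finset.card_attachFin, Finset.card_range]

theorem aux_relation_ones (N : ℕ) (hN : 1 ≤ N) (a : ℕ → ℕ → ℕ)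
    (ha : ∀ n j, a n j = ∑ p ∈ Finset.Nat.antidiagonalTuple N n,
      (Nat.multinomial Finset.univ p) ^ 2 *
        ∏ i ∈ Finset.univ.filter (fun i : Fin N => (i : ℕ) < j), p i) :
    ∀ j, j ≤ N → ∀ n : ℕ, 1 ≤ n →
      n * a n j = (N - j) * a n (j + 1) + j * n ^ 2 * a (n - 1) (j - 1) := by
  intro j hjN n hn
  classical
  set AT := Finset.Nat.antidiagonalTuple N n with hAT
  set S : Fin N → ℕ := fun k => ∑ p ∈ AT,
    Nat.multinomial Finset.univ p ^ 2 *
      (∏ i ∈ Finset.univ.filter (fun i : Fin N => (i : ℕ) < j), p i) * p k with hS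
  have hsum_p : ∀ p ∈ AT, ∑ i, p i = n := fun p hp =>
    (Finset.Nat.mem_antidiagonalTuple).mp hp
  -- Step 1
  have step1 : n * a n j = ∑ k : Fin N, S k := by
    rw [ha n j, Finset.mul_sum, hS, Finset.sum_comm]
    apply Finset.sum_congr rfl
    intro p hp
    rw [← Finset.mul_sum, hsum_p p hp, mul_comm]
  -- Step 2a
  have step2a : ∀ k : Fin N, ¬ ((k : ℕ) < j) → S k = a n (j + 1) := by
    intro k hk
    have hjN' : j < N := lt_of_le_of_lt (not_lt.mp hk) k.isLt
    set jF : Fin N := ⟨j, hjN'⟩ with hjF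
    set σ := Equiv.swap k jF with hσ
    rw [ha n (j + 1), ← hAT,
      ← sum_AT_comp σ (fun p => Nat.multinomial Finset.univ p ^ 2 *
        ∏ i ∈ Finset.univ.filter (fun i : Fin N => (i : ℕ) < j + 1), p i)]
    apply Finset.sum_congr rfl
    intro p hp
    have hins : (Finset.univ.filter (fun i : Fin N => (i : ℕ) < j + 1)) =
        insert jF (Finset.univ.filter (fun i : Fin N => (i : ℕ) < j)) := by
      ext i
      simp [hjF, Fin.ext_iff]
      omega
    rw [mult_comp, hins, Finset.prod_insert (by simp [hjF])]
    have h1 : (p ∘ σ) jF = p k := by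
      simp [hσ, Equiv.swap_apply_right]
    have h2 : ∀ i ∈ Finset.univ.filter (fun i : Fin N => (i : ℕ) < j),
        (p ∘ σ) i = p i := by
      intro i hi
      simp only [Finset.mem_filter] at hi
      have hik : i ≠ k := by
        intro h; rw [h] at hi; omega
      have hijF : i ≠ jF := by
        intro h; rw [h] at hi; simp [hjF] at hi
      simp [hσ, Equiv.swap_apply_of_ne_of_ne hik hijF]
    rw [Finset.prod_congr rfl h2, h1]
    ring
  -- Step 2b
  have step2b : ∀ k : Fin N, (k : ℕ) < j → S k = n ^ 2 * a (n - 1) (j - 1) := by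
    intro k hk
    have hj1 : 1 ≤ j := by omega
    have hj1N : j - 1 < N := by omega
    set kF : Fin N := ⟨j - 1, hj1N⟩ with hkF
    -- S k = S kF
    have hswap : S k = S kF := by
      set σ := Equiv.swap k kF with hσ
      rw [hS]
      simp only
      rw [← sum_AT_comp σ (fun p => Nat.multinomial Finset.univ p ^ 2 *
        (∏ i ∈ Finset.univ.filter (fun i : Fin N => (i : ℕ) < j), p i) * p kF)]
      apply Finset.sum_congr rfl
      intro p hp
      have hprod : ∏ i ∈ Finset.univ.filter (fun i : Fin N => (i : ℕ) < j), (p ∘ σ) i =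
          ∏ i ∈ Finset.univ.filter (fun i : Fin N => (i : ℕ) < j), p i := by
        apply Finset.prod_bij' (i := fun x _ => σ x) (j := fun x _ => σ x)
        · intro x hx
          simp only [Finset.mem_filter, Finset.mem_univ, true_and] at hx ⊢
          rcases eq_or_ne x k with h | h1
          · rw [h, hσ, Equiv.swap_apply_left]
            have : (kF : ℕ) = j - 1 := rfl
            omega
          rcases eq_or_ne x kF with h | h2
          · rw [h, hσ, Equiv.swap_apply_right]; omega
          · rw [hσ, Equiv.swap_apply_of_ne_of_ne h1 h2]; exact hx
        · intro x hx
          simp only [Finset.mem_filter, Finset.mem_univ, true_and] at hx ⊢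
          rcases eq_or_ne x k with h | h1
          · rw [h, hσ, Equiv.swap_apply_left]
            have : (kF : ℕ) = j - 1 := rfl
            omega
          rcases eq_or_ne x kF with h | h2
          · rw [h, hσ, Equiv.swap_apply_right]; omega
          · rw [hσ, Equiv.swap_apply_of_ne_of_ne h1 h2]; exact hx
        · intro x _; simp [hσ]
        · intro x _; simp [hσ]
        · intro x _; rfl
      have hval : (p ∘ σ) kF = p k := by simp [hσ, Equiv.swap_apply_right]
      rw [mult_comp, hprod, hval]
    rw [hswap, hS]
    simp only
    -- split off the kF factor
    have hins : (Finset.univ.filter (fun i : Fin N => (i : ℕ) < j)) =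
        insert kF (Finset.univ.filter (fun i : Fin N => (i : ℕ) < j - 1)) := by
      ext i
      simp [hkF, Fin.ext_iff]
      omega
    have hkFnot : kF ∉ Finset.univ.filter (fun i : Fin N => (i : ℕ) < j - 1) := by
      simp [hkF]
    have step : ∀ p : Fin N → ℕ,
        Nat.multinomial Finset.univ p ^ 2 *
          (∏ i ∈ Finset.univ.filter (fun i : Fin N => (i : ℕ) < j), p i) * p kF =
        Nat.multinomial Finset.univ p ^ 2 * p kF ^ 2 *
          ∏ i ∈ Finset.univ.filter (fun i : Fin N => (i : ℕ) < j - 1), p i := by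
      intro p
      rw [hins, Finset.prod_insert hkFnot]
      ring
    simp only [step]
    -- restrict to p kF ≥ 1
    rw [← Finset.sum_filter_of_ne (p := fun p : Fin N → ℕ => 1 ≤ p kF)
      (f := fun p => Nat.multinomial Finset.univ p ^ 2 * p kF ^ 2 *
        ∏ i ∈ Finset.univ.filter (fun i : Fin N => (i : ℕ) < j - 1), p i)
      (by intro p _ hne; by_contra h; push_neg at h
          interval_cases h' : p kF <;> simp_all)]
    rw [ha (n - 1) (j - 1), Finset.mul_sum]
    -- bijection with antidiagonalTuple N (n-1)
    apply Finset.sum_nbij' (i := fun p => Function.update p kF (p kF - 1))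
      (j := fun q => Function.update q kF (q kF + 1))
    · intro p hp
      simp only [Finset.mem_filter] at hp
      obtain ⟨hp1, hp2⟩ := hp
      rw [Finset.Nat.mem_antidiagonalTuple] at *
      rw [Finset.sum_update_of_mem (Finset.mem_univ kF)]
      rw [← Finset.add_sum_erase _ p (Finset.mem_univ kF), Finset.erase_eq] at hp1
      omega
    · intro q hq
      rw [Finset.Nat.mem_antidiagonalTuple] at hq
      simp only [Finset.mem_filter]
      constructor
      · rw [hAT, Finset.Nat.mem_antidiagonalTuple]
        rw [Finset.sum_update_of_mem (Finset.mem_univ kF)]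
        rw [← Finset.add_sum_erase _ q (Finset.mem_univ kF), Finset.erase_eq] at hq
        omega
      · simp
    · intro p hp
      simp only [Finset.mem_filter] at hp
      ext i
      rcases eq_or_ne i kF with h | h
      · subst h; simp; omega
      · simp [Function.update_of_ne h]
    · intro q hq
      ext i
      rcases eq_or_ne i kF with h | h
      · subst h; simp
      · simp [Function.update_of_ne h]
    · intro p hp
      simp only [Finset.mem_filter] at hp
      obtain ⟨hp1, hp2⟩ := hp
      have hpn : ∑ i, p i = n := hsum_p p hp1
      have key := mult_decr p kF hp2
      rw [hpn] at key
      have key2 : Nat.multinomial Finset.univ p ^ 2 * p kF ^ 2 =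
          n ^ 2 * Nat.multinomial Finset.univ (Function.update p kF (p kF - 1)) ^ 2 := by
        rw [← mul_pow, key, mul_pow]
      have hprodeq : ∏ i ∈ Finset.univ.filter (fun i : Fin N => (i : ℕ) < j - 1),
          Function.update p kF (p kF - 1) i =
          ∏ i ∈ Finset.univ.filter (fun i : Fin N => (i : ℕ) < j - 1), p i := by
        apply Finset.prod_congr rfl
        intro i hi
        have : i ≠ kF := by
          simp only [Finset.mem_filter] at hi
          intro h
          rw [h] at hi
          have : (kF : ℕ) = j - 1 := rfl
          omega
        rw [Function.update_of_ne this]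
      rw [key2, hprodeq]
      ring
  -- assemble
  have hsplit := Finset.sum_filter_add_sum_filter_not Finset.univ
    (fun k : Fin N => (k : ℕ) < j) S
  rw [step1, ← hsplit]
  have h1 : ∑ k ∈ Finset.univ.filter (fun k : Fin N => (k : ℕ) < j), S k =
      j * (n ^ 2 * a (n - 1) (j - 1)) := by
    rw [Finset.sum_congr rfl (fun k hk => step2b k (Finset.mem_filter.mp hk).2),
      Finset.sum_const, card_filter_lt hjN, smul_eq_mul]
  have h2 : ∑ k ∈ Finset.univ.filter (fun k : Fin N => ¬ (k : ℕ) < j), S k =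
      (N - j) * a n (j + 1) := by
    rw [Finset.sum_congr rfl (fun k hk => step2a k (Finset.mem_filter.mp hk).2),
      Finset.sum_const, smul_eq_mul]
    congr 1
    have := Finset.card_filter_add_card_filter_not
      (s := (Finset.univ : Finset (Fin N))) (p := fun k : Fin N => (k : ℕ) < j)
    rw [card_filter_lt hjN, Finset.card_univ, Fintype.card_fin] at this
    omega
  rw [h1, h2]
  ring
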